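/- Let G be a group such that [u, vⁿ] ∈ Z(G) for all u, v ∈ G. Define a ⋆ b = b^(n+1) a b^(-(n+1)) and let a /⋆ b = b^(-(n+1)) a b^(n+1) denote its right inverse operation. Then for all x, a, b ∈ G, conjugation of x by a /∘ b equals conjugation of x by a /⋆ b, where a /∘ b = b⁻¹ a b. -/
import Mathlib


/-- If every commutator `[u, vⁿ]` is central, then with `a /∘ b = b⁻¹ * a * b`
and `a /⋆ b = b^(-(n+1)) * a * b^(n+1)`, conjugation of `x` by `a /∘ b` equals
conjugation of `x` by `a /⋆ b`. -/
theorem strange_relation_inv_conj {G : Type*} [Group G] (n : ℕ)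
    (h : ∀ u v : G, u * v ^ n * u⁻¹ * (v ^ n)⁻¹ ∈ Subgroup.center G)
    (x a b : G) :
    (b⁻¹ * a * b) * x * (b⁻¹ * a * b)⁻¹ =
      ((b ^ (n + 1))⁻¹ * a * b ^ (n + 1)) * x * ((b ^ (n + 1))⁻¹ * a * b ^ (n + 1))⁻¹ := by
  have hc := Subgroup.mem_center_iff.mp (h a⁻¹ b⁻¹)
  set c : G := a⁻¹ * (b⁻¹) ^ n * a⁻¹⁻¹ * ((b⁻¹) ^ n)⁻¹ with hcdef
  have key : (b ^ (n + 1))⁻¹ * a * b ^ (n + 1) = b⁻¹ * (a * c) * b := by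
    rw [hcdef]; rw [pow_succ, inv_pow]; group
  rw [key]
  have h2 := hc (b * x * b⁻¹)
  calc (b⁻¹ * a * b) * x * (b⁻¹ * a * b)⁻¹
      = b⁻¹ * (a * ((b * x * b⁻¹) * c) * c⁻¹ * a⁻¹) * b := by group
    _ = b⁻¹ * (a * (c * (b * x * b⁻¹)) * c⁻¹ * a⁻¹) * b := by rw [← h2]
    _ = (b⁻¹ * (a * c) * b) * x * (b⁻¹ * (a * c) * b)⁻¹ := by group
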